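/- Legendre transform computation for the ECF pressure function: define φ = (√5+1)/2 and Λ: ℝ → (−∞, +∞] by Λ(θ) = −θ − 2·log φ for θ ≤ −φ, Λ(θ) = −θ − log(1−θ) for −φ < θ < 1, and Λ(θ) = +∞ for θ ≥ 1. Then for every x ∈ ℝ, sup_{θ ∈ ℝ} (θx − Λ(θ)) = I(x), where I(x) = x − log(x+1) if x > −(√5−1)/2; I(x) = −φ·(x+1) + 2·log φ if −1 ≤ x ≤ −(√5−1)/2; and I(x) = +∞ if x < −1 (the supremum and equality being taken in the extended reals, with θx − Λ(θ) = −∞ when Λ(θ) = +∞). -/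

import Mathlib

/-- The golden ratio `φ = (√5 + 1)/2`. -/
noncomputable def ecfPhi : ℝ := (Real.sqrt 5 + 1) / 2

/-- The pressure function `Λ` of the ECF large deviation principle. -/
noncomputable def ecfLambda (θ : ℝ) : EReal :=
  if 1 ≤ θ then ⊤
  else if θ ≤ -ecfPhi then ((-θ - 2 * Real.log ecfPhi : ℝ) : EReal)
  else ((-θ - Real.log (1 - θ) : ℝ) : EReal)

/-- The rate function of the LDP for Engel continued fractions. -/
noncomputable def rateI (x : ℝ) : EReal :=
  if x < -1 then ⊤
  else if x ≤ -(Real.sqrt 5 - 1) / 2 then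
    ((-(Real.sqrt 5 + 1) / 2 * (x + 1) + 2 * Real.log ((Real.sqrt 5 + 1) / 2) : ℝ) : EReal)
  else ((x - Real.log (x + 1) : ℝ) : EReal)

lemma ecf_key_log (c y : ℝ) (hc : 0 < c) (hy : 0 < y) :
    Real.log y ≤ Real.log c + (y - c) / c := by
  have h := Real.log_le_sub_one_of_pos (show 0 < y / c by positivity)
  rw [Real.log_div hy.ne' hc.ne'] at h
  have he : y / c - 1 = (y - c) / c := by field_simp
  rw [he] at h; linarith

lemma ecf_C_log (x θ : ℝ) (hx : 0 < x + 1) (hθ : θ < 1) :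
    Real.log (1 - θ) ≤ -Real.log (x + 1) + (1 - θ) * (x + 1) - 1 := by
  have h := ecf_key_log (1 / (x + 1)) (1 - θ) (by positivity) (by linarith)
  rw [one_div, Real.log_inv] at h
  have he : (1 - θ - (x + 1)⁻¹) / (x + 1)⁻¹ = (1 - θ) * (x + 1) - 1 := by
    field_simp
  rw [he] at h; linarith

/-- Legendre transform computation: `sup_θ (θx - Λ(θ)) = I(x)` for every real `x`
(with `θx - Λ(θ) = -∞` when `Λ(θ) = +∞`). -/
theorem ecf_legendre_transform (x : ℝ) :
    (⨆ θ : ℝ, ((θ * x : ℝ) : EReal) - ecfLambda θ) = rateI x := by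
  have hs : Real.sqrt 5 * Real.sqrt 5 = 5 := Real.mul_self_sqrt (by norm_num)
  have hs2 : 2 < Real.sqrt 5 := by nlinarith [Real.sqrt_nonneg 5]
  have hs3 : Real.sqrt 5 < 3 := by nlinarith [Real.sqrt_nonneg 5]
  have hφ : ecfPhi = (Real.sqrt 5 + 1) / 2 := rfl
  have hφ1 : 1 < ecfPhi := by rw [hφ]; linarith
  have hφsq : ecfPhi * ecfPhi = ecfPhi + 1 := by rw [hφ]; nlinarith
  have h2log : Real.log (1 + ecfPhi) = 2 * Real.log ecfPhi := by
    rw [show (1 : ℝ) + ecfPhi = ecfPhi ^ 2 by nlinarith]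
    rw [Real.log_pow]; push_cast; ring
  by_cases hx1 : x < -1
  · -- sup is ⊤
    rw [rateI, if_pos hx1]
    rw [iSup_eq_top]
    intro b hb
    have hbr : b ≤ ((b.toReal : ℝ) : EReal) := EReal.le_coe_toReal hb.ne
    set r : ℝ := b.toReal with hr
    set θ₀ : ℝ := min (-ecfPhi) ((r + 1 - 2 * Real.log ecfPhi) / (x + 1)) with hθ₀
    refine ⟨θ₀, lt_of_le_of_lt hbr ?_⟩
    have hθφ : θ₀ ≤ -ecfPhi := min_le_left _ _
    have hθ1 : ¬ (1 ≤ θ₀) := by push_neg; linarith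
    rw [ecfLambda, if_neg hθ1, if_pos hθφ, ← EReal.coe_sub, EReal.coe_lt_coe_iff]
    have hx1' : x + 1 < 0 := by linarith
    have hmul : r + 1 - 2 * Real.log ecfPhi ≤ θ₀ * (x + 1) := by
      have h := min_le_right (-ecfPhi) ((r + 1 - 2 * Real.log ecfPhi) / (x + 1))
      rw [← hθ₀] at h
      exact (le_div_iff_of_neg hx1').mp h
    nlinarith
  · push_neg at hx1
    rw [rateI, if_neg (not_lt.mpr hx1)]
    by_cases hx2 : x ≤ -(Real.sqrt 5 - 1) / 2
    · -- branch B
      rw [if_pos hx2]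
      have hx10 : 0 ≤ x + 1 := by linarith
      have hx1φ : (x + 1) * (1 + ecfPhi) ≤ 1 := by rw [hφ]; nlinarith
      apply le_antisymm
      · apply iSup_le
        intro θ
        rw [ecfLambda]
        split_ifs with h1 h2
        · simp
        · rw [← EReal.coe_sub, EReal.coe_le_coe_iff]
          rw [hφ] at h2 ⊢
          nlinarith
        · push_neg at h1 h2
          rw [← EReal.coe_sub, EReal.coe_le_coe_iff]
          have hlog : Real.log (1 - θ) ≤
              2 * Real.log ecfPhi - (θ + ecfPhi) / (1 + ecfPhi) := by
            have h := ecf_key_log (1 + ecfPhi) (1 - θ) (by linarith) (by linarith)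
            rw [h2log] at h
            have he : (1 - θ - (1 + ecfPhi)) / (1 + ecfPhi)
                = -((θ + ecfPhi) / (1 + ecfPhi)) := by ring
            rw [he] at h; linarith
          have hmul : (θ + ecfPhi) * (x + 1) ≤ (θ + ecfPhi) / (1 + ecfPhi) := by
            rw [le_div_iff₀ (by linarith : (0:ℝ) < 1 + ecfPhi)]
            nlinarith
          rw [hφ] at hmul hlog
          nlinarith
      · refine le_iSup_of_le (-ecfPhi) (le_of_eq ?_)
        have h1 : ¬ (1 ≤ -ecfPhi) := by push_neg; linarith
        rw [ecfLambda, if_neg h1, if_pos le_rfl, ← EReal.coe_sub, EReal.coe_eq_coe_iff]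
        rw [hφ]; ring
    · -- branch C
      push_neg at hx2
      rw [if_neg (not_le.mpr hx2)]
      have hx0 : 0 < x + 1 := by nlinarith
      apply le_antisymm
      · apply iSup_le
        intro θ
        rw [ecfLambda]
        split_ifs with h1 h2
        · simp
        · push_neg at h1
          rw [← EReal.coe_sub, EReal.coe_le_coe_iff]
          have hlog := ecf_C_log x (-ecfPhi) hx0 (by linarith)
          rw [show (1 : ℝ) - -ecfPhi = 1 + ecfPhi by ring, h2log] at hlog
          nlinarith [mul_nonneg (by linarith : (0:ℝ) ≤ -ecfPhi - θ) hx0.le]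
        · push_neg at h1 h2
          rw [← EReal.coe_sub, EReal.coe_le_coe_iff]
          have hlog := ecf_C_log x θ hx0 h1
          nlinarith
      · refine le_iSup_of_le (x / (x + 1)) (le_of_eq ?_)
        set t : ℝ := x / (x + 1) with ht
        have ht1 : t < 1 := by
          rw [ht, div_lt_one hx0]; linarith
        have htφ : -ecfPhi < t := by
          rw [ht, lt_div_iff₀ hx0]
          nlinarith
        have h1 : ¬ (1 ≤ t) := by push_neg; exact ht1
        have h2 : ¬ (t ≤ -ecfPhi) := by push_neg; exact htφ
        rw [ecfLambda, if_neg h1, if_neg h2, ← EReal.coe_sub, EReal.coe_eq_coe_iff]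
        have h1t : 1 - t = 1 / (x + 1) := by
          rw [ht]; field_simp; ring
        rw [h1t, one_div, Real.log_inv]
        have htx : t * (x + 1) = x := by
          rw [ht]; field_simp
        nlinarith
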